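/- Let G_τ(A,C) = Σ_{y=1}^h f_y ‖m_y − Σ A C_y‖² + τ ‖A‖_F² with τ > 0. If (Â, Ĉ) is a stationary point of G_τ (i.e., all partial derivatives with respect to the entries of A and of C_1,…,C_h vanish at (Â, Ĉ)), then Â = 0. -/

import Mathlib

open Matrix

/-- The ridge SIR criterion
`G_τ(A,C) = Σ_y f_y ‖m_y − Σ A C_y‖² + τ ‖A‖_F²`. -/
noncomputable def Gt {p d h : ℕ} (f : Fin h → ℝ) (m : Fin h → Fin p → ℝ)
    (S : Matrix (Fin p) (Fin p) ℝ) (τ : ℝ)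
    (A : Matrix (Fin p) (Fin d) ℝ) (C : Fin h → Fin d → ℝ) : ℝ :=
  (∑ y, f y * ∑ i, (m y i - S.mulVec (A.mulVec (C y)) i) ^ 2)
    + τ * ∑ i, ∑ j, (A i j) ^ 2

lemma quad (a b : ℝ) : HasDerivAt (fun t : ℝ => (a + t * b)^2) (2*a*b) 0 := by
  have h : HasDerivAt (fun t : ℝ => a + t * b) b 0 := by
    simpa using ((hasDerivAt_id (0:ℝ)).mul_const b).const_add a
  simpa using h.fun_pow 2

lemma derivA {p d h : ℕ} (f : Fin h → ℝ) (m : Fin h → Fin p → ℝ)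
    (S : Matrix (Fin p) (Fin p) ℝ) (τ : ℝ)
    (A E : Matrix (Fin p) (Fin d) ℝ) (C : Fin h → Fin d → ℝ) :
    HasDerivAt (fun t : ℝ => Gt f m S τ (A + t • E) C)
      ((∑ y, f y * ∑ l, 2 * (m y l - S.mulVec (A.mulVec (C y)) l)
          * (-(S.mulVec (E.mulVec (C y)) l)))
        + τ * ∑ i, ∑ j, 2 * A i j * E i j) 0 := by
  unfold Gt
  apply HasDerivAt.add
  · apply HasDerivAt.fun_sum
    intro y _
    apply HasDerivAt.const_mul
    apply HasDerivAt.fun_sum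
    intro l _
    have := quad (m y l - S.mulVec (A.mulVec (C y)) l) (-(S.mulVec (E.mulVec (C y)) l))
    have heq : (fun t : ℝ => (m y l - S.mulVec ((A + t • E).mulVec (C y)) l) ^ 2)
        = fun t : ℝ => ((m y l - S.mulVec (A.mulVec (C y)) l)
            + t * (-(S.mulVec (E.mulVec (C y)) l))) ^ 2 := by
      funext t
      simp [Matrix.add_mulVec, Matrix.smul_mulVec, Matrix.mulVec_add,
        Matrix.mulVec_smul, smul_eq_mul]
      try ring
    rw [heq]
    convert this using 1
    try ring
  · apply HasDerivAt.const_mul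
    apply HasDerivAt.fun_sum
    intro i _
    apply HasDerivAt.fun_sum
    intro j _
    have := quad (A i j) (E i j)
    have heq : (fun t : ℝ => ((A + t • E) i j) ^ 2)
        = fun t : ℝ => (A i j + t * E i j) ^ 2 := by
      funext t
      simp [Matrix.add_apply, Matrix.smul_apply, smul_eq_mul]
    rw [heq]
    exact this

lemma derivC {p d h : ℕ} (f : Fin h → ℝ) (m : Fin h → Fin p → ℝ)
    (S : Matrix (Fin p) (Fin p) ℝ) (τ : ℝ)
    (A : Matrix (Fin p) (Fin d) ℝ) (C : Fin h → Fin d → ℝ) (y : Fin h) (j : Fin d) :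
    HasDerivAt (fun t : ℝ =>
        Gt f m S τ A (Function.update C y (C y + t • (Pi.single j 1 : Fin d → ℝ))))
      (f y * ∑ l, 2 * (m y l - S.mulVec (A.mulVec (C y)) l)
          * (-(S.mulVec (A.mulVec (Pi.single j 1)) l))) 0 := by
  unfold Gt
  apply HasDerivAt.add_const
  have hsum : HasDerivAt (fun t : ℝ => ∑ y', f y' * ∑ l,
      (m y' l - S.mulVec (A.mulVec (Function.update C y (C y + t • (Pi.single j 1 : Fin d → ℝ)) y')) l) ^ 2)
      (∑ y', if y' = y then f y * ∑ l, 2 * (m y l - S.mulVec (A.mulVec (C y)) l)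
          * (-(S.mulVec (A.mulVec (Pi.single j 1)) l)) else 0) 0 := by
    apply HasDerivAt.fun_sum
    intro y' _
    by_cases hy : y' = y
    · subst hy
      simp only [Function.update_self, if_true]
      apply HasDerivAt.const_mul
      apply HasDerivAt.fun_sum
      intro l _
      have := quad (m y' l - S.mulVec (A.mulVec (C y')) l)
        (-(S.mulVec (A.mulVec (Pi.single j 1)) l))
      have heq : (fun t : ℝ => (m y' l - S.mulVec (A.mulVec (C y' + t • (Pi.single j 1 : Fin d → ℝ))) l) ^ 2)
          = fun t : ℝ => ((m y' l - S.mulVec (A.mulVec (C y')) l)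
              + t * (-(S.mulVec (A.mulVec (Pi.single j 1)) l))) ^ 2 := by
        funext t
        simp [Matrix.mulVec_add, Matrix.mulVec_smul, smul_eq_mul]
        ring
      rw [heq]
      convert this using 1
      try ring
    · simp only [Function.update_of_ne hy, if_neg hy]
      exact hasDerivAt_const 0 _
  simpa using hsum

/-- If `τ > 0` and `(Â, Ĉ)` is a stationary point of `G_τ` (all partial derivatives
with respect to the entries of `A` and of `C_1,…,C_h` vanish), then `Â = 0`. -/
theorem stationary_implies_A_eq_zero {p d h : ℕ} (f : Fin h → ℝ) (hf : ∀ y, 0 < f y)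
    (m : Fin h → Fin p → ℝ) (S : Matrix (Fin p) (Fin p) ℝ) (hS : S.IsSymm)
    (τ : ℝ) (hτ : 0 < τ)
    (Ahat : Matrix (Fin p) (Fin d) ℝ) (Chat : Fin h → Fin d → ℝ)
    (hA : ∀ (i : Fin p) (k : Fin d),
      deriv (fun t : ℝ => Gt f m S τ (Ahat + t • Matrix.single i k (1 : ℝ)) Chat) 0 = 0)
    (hC : ∀ (y : Fin h) (j : Fin d),
      deriv (fun t : ℝ =>
        Gt f m S τ Ahat (Function.update Chat y (Chat y + t • (Pi.single j 1 : Fin d → ℝ)))) 0 = 0) :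
    Ahat = 0 := by
  set r : Fin h → Fin p → ℝ := fun y l => m y l - S.mulVec (Ahat.mulVec (Chat y)) l with hr
  have eA : ∀ i k, (∑ y, f y * ∑ l, r y l * (S l i * Chat y k)) = τ * Ahat i k := by
    intro i k
    have h1 := (derivA f m S τ Ahat (Matrix.single i k 1) Chat).deriv
    have h2 : (∑ y, f y * ∑ l, 2 * (m y l - S.mulVec (Ahat.mulVec (Chat y)) l)
          * (-(S.mulVec ((Matrix.single i k (1:ℝ)).mulVec (Chat y)) l)))
        + τ * ∑ i', ∑ j, 2 * Ahat i' j * Matrix.single i k (1:ℝ) i' j = 0 := by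
      rw [← h1, hA i k]
    have hval : (∑ y, f y * ∑ l, 2 * (m y l - S.mulVec (Ahat.mulVec (Chat y)) l)
          * (-(S.mulVec ((Matrix.single i k (1:ℝ)).mulVec (Chat y)) l)))
        + τ * ∑ i', ∑ j, 2 * Ahat i' j * Matrix.single i k (1:ℝ) i' j
        = (-2) * (∑ y, f y * ∑ l, r y l * (S l i * Chat y k)) + τ * (2 * Ahat i k) := by
      have hE : ∀ (y : Fin h) (l : Fin p),
          S.mulVec ((Matrix.single i k (1:ℝ)).mulVec (Chat y)) l = S l i * Chat y k := by
        intro y l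
        simp [Matrix.mulVec, dotProduct, Matrix.single, ite_and, mul_ite, ite_mul,
          Finset.sum_ite_irrel, Finset.sum_ite_eq, Finset.sum_ite_eq']
      have hT : τ * ∑ i', ∑ j, 2 * Ahat i' j * Matrix.single i k (1:ℝ) i' j
          = τ * (2 * Ahat i k) := by
        simp [Matrix.single, ite_and, mul_ite, ite_mul,
          Finset.sum_ite_irrel, Finset.sum_ite_eq, Finset.sum_ite_eq']
      rw [hT]
      simp only [hE, hr]
      congr 1
      simp only [Finset.mul_sum]
      apply Finset.sum_congr rfl; intro y _
      apply Finset.sum_congr rfl; intro l _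
      ring
    rw [hval] at h2
    linear_combination (-1/2 : ℝ) * h2
  have eC : ∀ y j, (∑ l, r y l * (∑ c, S l c * Ahat c j)) = 0 := by
    intro y j
    have h1 := (derivC f m S τ Ahat Chat y j).deriv
    have h2 : f y * ∑ l, 2 * (m y l - S.mulVec (Ahat.mulVec (Chat y)) l)
        * (-(S.mulVec (Ahat.mulVec (Pi.single j 1)) l)) = 0 := by
      rw [← h1, hC y j]
    have hval : f y * ∑ l, 2 * (m y l - S.mulVec (Ahat.mulVec (Chat y)) l)
        * (-(S.mulVec (Ahat.mulVec (Pi.single j 1)) l))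
        = f y * ((-2) * ∑ l, r y l * (∑ c, S l c * Ahat c j)) := by
      have hP : ∀ l : Fin p, S.mulVec (Ahat.mulVec (Pi.single j 1)) l = ∑ c, S l c * Ahat c j := by
        intro l
        simp [Matrix.mulVec, dotProduct, Pi.single_apply, mul_ite, ite_mul,
          Finset.sum_ite_irrel, Finset.sum_ite_eq, Finset.sum_ite_eq']
      simp only [hP, hr]
      congr 1
      rw [Finset.mul_sum]
      apply Finset.sum_congr rfl
      intro l _
      ring
    rw [hval] at h2
    rcases mul_eq_zero.mp h2 with h | h
    · exact absurd h (ne_of_gt (hf y))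
    · linarith
  have key : τ * ∑ i, ∑ k, Ahat i k ^ 2 = 0 := by
    have c1 : τ * ∑ i, ∑ k, Ahat i k ^ 2
        = ∑ i, ∑ k, Ahat i k * (τ * Ahat i k) := by
      rw [Finset.mul_sum]
      apply Finset.sum_congr rfl; intro i _
      rw [Finset.mul_sum]
      apply Finset.sum_congr rfl; intro k _
      ring
    have c2 : ∑ i, ∑ k, Ahat i k * (∑ y, f y * ∑ l, r y l * (S l i * Chat y k))
        = ∑ y, f y * ∑ j, Chat y j * (∑ l, r y l * (∑ c, S l c * Ahat c j)) := by
      have L : ∑ i, ∑ k, Ahat i k * (∑ y, f y * ∑ l, r y l * (S l i * Chat y k))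
          = ∑ y, ∑ l, ∑ i, ∑ k, f y * (r y l * (S l i * (Ahat i k * Chat y k))) := by
        simp only [Finset.mul_sum]
        conv_lhs => enter [2, i]; rw [Finset.sum_comm]
        rw [Finset.sum_comm]
        apply Finset.sum_congr rfl; intro y _
        conv_lhs => enter [2, i]; rw [Finset.sum_comm]
        rw [Finset.sum_comm]
        apply Finset.sum_congr rfl; intro l _
        apply Finset.sum_congr rfl; intro i _
        apply Finset.sum_congr rfl; intro k _
        ring
      have R : ∑ y, f y * ∑ j, Chat y j * (∑ l, r y l * (∑ c, S l c * Ahat c j))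
          = ∑ y, ∑ l, ∑ i, ∑ k, f y * (r y l * (S l i * (Ahat i k * Chat y k))) := by
        simp only [Finset.mul_sum]
        apply Finset.sum_congr rfl; intro y _
        rw [Finset.sum_comm]
        apply Finset.sum_congr rfl; intro l _
        rw [Finset.sum_comm]
        apply Finset.sum_congr rfl; intro i _
        apply Finset.sum_congr rfl; intro k _
        ring
      rw [L, R]
    calc τ * ∑ i, ∑ k, Ahat i k ^ 2
        = ∑ i, ∑ k, Ahat i k * (τ * Ahat i k) := c1
      _ = ∑ i, ∑ k, Ahat i k * (∑ y, f y * ∑ l, r y l * (S l i * Chat y k)) := by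
          apply Finset.sum_congr rfl; intro i _
          apply Finset.sum_congr rfl; intro k _
          rw [eA i k]
      _ = ∑ y, f y * ∑ j, Chat y j * (∑ l, r y l * (∑ c, S l c * Ahat c j)) := c2
      _ = 0 := by
          apply Finset.sum_eq_zero; intro y _
          rw [Finset.mul_sum]
          apply Finset.sum_eq_zero; intro j _
          rw [eC y j]
          ring
  have hsum : ∑ i, ∑ k, Ahat i k ^ 2 = 0 := by
    rcases mul_eq_zero.mp key with h | h
    · exact absurd h (ne_of_gt hτ)
    · exact h
  have hz : ∀ i k, Ahat i k = 0 := by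
    intro i k
    have hle : Ahat i k ^ 2 ≤ ∑ i, ∑ k, Ahat i k ^ 2 := by
      calc Ahat i k ^ 2 ≤ ∑ k, Ahat i k ^ 2 :=
            Finset.single_le_sum (f := fun k => Ahat i k ^ 2)
              (fun k _ => sq_nonneg _) (Finset.mem_univ k)
        _ ≤ ∑ i, ∑ k, Ahat i k ^ 2 :=
            Finset.single_le_sum (f := fun i => ∑ k, Ahat i k ^ 2)
              (fun i _ => Finset.sum_nonneg fun k _ => sq_nonneg _) (Finset.mem_univ i)
    have := sq_nonneg (Ahat i k)
    have hsq : Ahat i k ^ 2 = 0 := le_antisymm (hsum ▸ hle) this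
    exact pow_eq_zero_iff (by norm_num) |>.mp hsq
  ext i k
  simp [hz i k]
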